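/- For Re(s) > 1/2 and nonzero real n, the integral ∫_{-∞}^{∞} (1+t²)^{-s} e^{-2πint} dt equals 2π^s |n|^{s-1/2} Γ(s)^{-1} K_{s-1/2}(2π|n|), where K_ν is the modified Bessel function of the second kind. -/

import Mathlib

open MeasureTheory Set Filter Complex
open scoped Real

/-- The modified Bessel function of the second kind `K_ν(x)`, for `x > 0`,
via the integral representation `K_ν(x) = ∫_0^∞ exp(-x cosh t) cosh(ν t) dt`. -/
noncomputable def besselK (ν : ℂ) (x : ℝ) : ℂ :=
  ∫ t in Set.Ioi (0 : ℝ), (Real.exp (-x * Real.cosh t) : ℂ) * Complex.cosh (ν * t)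

namespace BesselKAux

lemma sq_div_two_le_cosh (y : ℝ) : y ^ 2 / 2 ≤ Real.cosh y := by
  have key : ∀ t : ℝ, 0 ≤ t → t ^ 2 / 2 ≤ Real.cosh t := by
    intro t ht
    have h1 : t / 2 ≤ Real.sinh (t / 2) := Real.self_le_sinh_iff.2 (by linarith)
    have h2 : Real.cosh t = Real.cosh (t/2) ^ 2 + Real.sinh (t/2) ^ 2 := by
      rw [← Real.cosh_two_mul]; ring_nf
    have h3 : Real.cosh (t/2) ^ 2 = Real.sinh (t/2) ^ 2 + 1 := Real.cosh_sq _
    have h4 : 0 ≤ Real.sinh (t/2) := le_trans (by linarith) h1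
    nlinarith [h1, h4]
  rcases le_total 0 y with h | h
  · exact key y h
  · have := key (-y) (by linarith)
    simpa [Real.cosh_neg] using this

lemma integrableOn_exp_mul_sub_cosh (b : ℝ) {X : ℝ} (hX : 0 < X) :
    IntegrableOn (fun y : ℝ => Real.exp (b * y - X * Real.cosh y)) (Ioi 0) := by
  have hbd : ∀ y : ℝ, 0 ≤ y →
      Real.exp (b * y - X * Real.cosh y) ≤ Real.exp ((b+1)^2/(2*X)) * Real.exp (-y) := by
    intro y hy
    rw [← Real.exp_add]
    apply Real.exp_le_exp.2
    have h1 := sq_div_two_le_cosh y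
    have h2 : (b+1) * y - X * (y^2/2) ≤ (b+1)^2/(2*X) := by
      rw [le_div_iff₀ (by positivity : (0:ℝ) < 2*X)]
      nlinarith [sq_nonneg ((b+1) - X * y)]
    nlinarith [mul_le_mul_of_nonneg_left h1 hX.le]
  refine Integrable.mono' ((exp_neg_integrableOn_Ioi 0 one_pos).const_mul
      (Real.exp ((b+1)^2/(2*X)))) ?_ ?_
  · exact (Real.continuous_exp.comp (by fun_prop)).aestronglyMeasurable
  · filter_upwards [ae_restrict_mem measurableSet_Ioi] with y hy
    rw [Real.norm_eq_abs, abs_of_pos (Real.exp_pos _)]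
    simpa [neg_mul, one_mul] using hbd y (le_of_lt hy)

lemma integrableOn_cexp_mul_sub_cosh (ν : ℂ) {X : ℝ} (hX : 0 < X) :
    IntegrableOn (fun y : ℝ => Complex.exp (ν * y) *
      Complex.exp (-(X * Real.cosh y : ℝ))) (Ioi 0) := by
  refine Integrable.mono' (integrableOn_exp_mul_sub_cosh ν.re hX) ?_ ?_
  · apply Continuous.aestronglyMeasurable
    fun_prop
  · filter_upwards with y
    rw [norm_mul, Complex.norm_exp, Complex.norm_exp]
    rw [← Real.exp_add]
    apply le_of_eq
    congr 1
    simp [Complex.mul_re]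
    ring

lemma integrableOn_Iic_cexp_mul_sub_cosh (ν : ℂ) {X : ℝ} (hX : 0 < X) :
    IntegrableOn (fun y : ℝ => Complex.exp (ν * y) *
      Complex.exp (-(X * Real.cosh y : ℝ))) (Iic 0) := by
  set f := fun y : ℝ => Complex.exp (ν * y) * Complex.exp (-(X * Real.cosh y : ℝ)) with hf
  have hmap : (volume : Measure ℝ).restrict (Iic (0:ℝ)) =
      Measure.map Neg.neg ((volume : Measure ℝ).restrict (Ici 0)) := by
    conv_lhs => rw [← Measure.map_neg_eq_self (volume : Measure ℝ)]
    rw [Measure.restrict_map measurable_neg measurableSet_Iic]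
    congr 1
    ext x
    simp
  rw [IntegrableOn, hmap,
    show (Neg.neg : ℝ → ℝ) = ⇑(Homeomorph.neg ℝ) from rfl,
    (Homeomorph.neg ℝ).measurableEmbedding.integrable_map_iff]
  have : (f ∘ ⇑(Homeomorph.neg ℝ)) = fun y : ℝ => Complex.exp ((-ν) * y) *
      Complex.exp (-(X * Real.cosh y : ℝ)) := by
    funext y
    have hy : (Homeomorph.neg ℝ) y = -y := rfl
    simp only [hf, Function.comp_apply, hy, Real.cosh_neg]
    push_cast
    ring_nf
  rw [this, ← IntegrableOn, integrableOn_Ici_iff_integrableOn_Ioi]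
  exact integrableOn_cexp_mul_sub_cosh (-ν) hX

lemma integral_cexp_mul_sub_cosh (ν : ℂ) {X : ℝ} (hX : 0 < X) :
    ∫ y : ℝ, Complex.exp (ν * y) * Complex.exp (-(X * Real.cosh y : ℝ)) =
      2 * besselK ν X := by
  have hIoi := integrableOn_cexp_mul_sub_cosh ν hX
  have hIoi' := integrableOn_cexp_mul_sub_cosh (-ν) hX
  have hIic := integrableOn_Iic_cexp_mul_sub_cosh ν hX
  rw [← intervalIntegral.integral_Iic_add_Ioi hIic hIoi]
  have hrefl : ∫ y in Iic (0:ℝ), Complex.exp (ν * y) * Complex.exp (-(X * Real.cosh y : ℝ))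
      = ∫ y in Ioi (0:ℝ), Complex.exp ((-ν) * y) * Complex.exp (-(X * Real.cosh y : ℝ)) := by
    have h0 := integral_comp_neg_Ioi (0:ℝ)
      (fun y : ℝ => Complex.exp (ν * y) * Complex.exp (-(X * Real.cosh y : ℝ)))
    rw [neg_zero] at h0
    rw [← h0]
    refine setIntegral_congr_fun measurableSet_Ioi (fun y hy => ?_)
    rw [Real.cosh_neg]
    push_cast
    ring_nf
  rw [hrefl, ← integral_add hIoi' hIoi]
  rw [besselK, ← integral_const_mul]
  refine setIntegral_congr_fun measurableSet_Ioi (fun y hy => ?_)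
  rw [Complex.cosh, Complex.ofReal_exp]
  push_cast
  ring_nf

lemma integral_comp_exp (h : ℝ → ℂ) :
    ∫ x in Ioi (0:ℝ), h x = ∫ y : ℝ, Real.exp y • h (Real.exp y) := by
  rw [← Real.range_exp, ← image_univ,
    integral_image_eq_integral_abs_deriv_smul MeasurableSet.univ
      (fun x _ => (Real.hasDerivAt_exp x).hasDerivWithinAt)
      (Real.exp_injective.injOn) h]
  simp [abs_of_pos (Real.exp_pos _)]

lemma integral_cpow_mul_exp_add_div (ν : ℂ) {c : ℝ} (hc : 0 < c) :
    ∫ u in Ioi (0:ℝ), (u:ℂ) ^ (ν-1) * Complex.exp (-(u + c^2/u : ℝ)) =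
      (c:ℂ) ^ ν * ∫ y : ℝ, Complex.exp (ν * y) * Complex.exp (-(2*c*Real.cosh y : ℝ)) := by
  set g : ℝ → ℂ := fun u => (u:ℂ) ^ (ν-1) * Complex.exp (-(u + c^2/u : ℝ)) with hg
  have h1 := integral_comp_mul_left_Ioi g 0 hc
  rw [mul_zero] at h1
  have h2 : ∫ u in Ioi (0:ℝ), g u = c • ∫ x in Ioi (0:ℝ), g (c * x) := by
    rw [h1, smul_smul, mul_inv_cancel₀ hc.ne', one_smul]
  rw [h2, integral_comp_exp (fun x => g (c * x)), ← integral_smul, ← integral_const_mul]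
  congr 1
  funext y
  have hexp : (0:ℝ) < Real.exp y := Real.exp_pos y
  have harg : c * Real.exp y + c^2/(c * Real.exp y) = 2*c*Real.cosh y := by
    rw [Real.cosh_eq, Real.exp_neg]
    field_simp
  have hpow : ((c * Real.exp y : ℝ) : ℂ) ^ (ν - 1) =
      (c:ℂ) ^ (ν-1) * Complex.exp (↑y * (ν-1)) := by
    rw [Complex.ofReal_mul, mul_cpow_ofReal_nonneg hc.le hexp.le]
    congr 1
    rw [Complex.ofReal_exp, Complex.cpow_def_of_ne_zero (Complex.exp_ne_zero _),
      Complex.log_exp (by simpa using Real.pi_pos) (by simpa using Real.pi_pos.le)]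
  have hcc : (c:ℂ) ^ ν = ↑c * (c:ℂ) ^ (ν - 1) := by
    conv_lhs => rw [show ν = 1 + (ν - 1) by ring,
      Complex.cpow_add _ _ (Complex.ofReal_ne_zero.2 hc.ne'), Complex.cpow_one]
  have hee : Complex.exp (↑y) * Complex.exp (↑y * (ν-1)) = Complex.exp (ν * ↑y) := by
    rw [← Complex.exp_add]
    ring_nf
  simp only [hg, smul_eq_mul]
  rw [harg, hpow, hcc]
  simp only [Complex.real_smul]
  rw [Complex.ofReal_exp, ← hee]
  ring

lemma integral_cpow_mul_exp_neg {s : ℂ} (hs : 0 < s.re) {c : ℝ} (hc : 0 < c) :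
    ∫ u in Ioi (0:ℝ), (u:ℂ) ^ (s-1) * Complex.exp (-((c:ℂ) * u)) =
      (c:ℂ) ^ (-s) * Complex.Gamma s := by
  have hg : mellin (fun t : ℝ => Complex.exp (-((1:ℝ) * t : ℝ) : ℝ)) s = Complex.Gamma s := by
    rw [Complex.Gamma_eq_integral hs, Complex.GammaIntegral, mellin]
    refine setIntegral_congr_fun measurableSet_Ioi (fun x hx => ?_)
    rw [smul_eq_mul, mul_comm]
    push_cast
    ring_nf
  have := mellin_comp_mul_left (fun t : ℝ => Complex.exp (-((1:ℝ) * t : ℝ) : ℝ)) s hc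
  rw [hg, smul_eq_mul] at this
  rw [← this, mellin]
  refine setIntegral_congr_fun measurableSet_Ioi (fun x hx => ?_)
  rw [smul_eq_mul]
  push_cast
  ring_nf

lemma integrableOn_cpow_mul_exp_neg {s : ℂ} (hs : 0 < s.re) {c : ℝ} (hc : 0 < c) :
    IntegrableOn (fun u : ℝ => (u:ℂ) ^ (s-1) * Complex.exp (-((c:ℂ) * u))) (Ioi 0) := by
  have hreal : IntegrableOn (fun u : ℝ => u ^ (s.re - 1) * Real.exp (-(c * u))) (Ioi 0) := by
    have := integrableOn_rpow_mul_exp_neg_mul_rpow (s := s.re - 1) (p := 1)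
      (by linarith) one_pos hc
    refine this.congr_fun (fun x hx => ?_) measurableSet_Ioi
    simp only [Real.rpow_one]
    ring_nf
  refine Integrable.mono' hreal ?_ ?_
  · apply ContinuousOn.aestronglyMeasurable ?_ measurableSet_Ioi
    apply ContinuousOn.mul
    · exact fun x hx =>
        (continuousAt_ofReal_cpow_const x _ (Or.inr (ne_of_gt hx))).continuousWithinAt
    · fun_prop
  · filter_upwards [ae_restrict_mem measurableSet_Ioi] with x hx
    rw [norm_mul, Complex.norm_exp,
      Complex.norm_cpow_eq_rpow_re_of_pos hx]
    simp [Complex.sub_re]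

lemma integral_rpow_mul_exp_neg' {σ : ℝ} (hσ : 0 < σ) {c : ℝ} (hc : 0 < c) :
    ∫ u in Ioi (0:ℝ), u ^ (σ-1) * Real.exp (-(c*u)) = c ^ (-σ) * Real.Gamma σ := by
  have h := integral_rpow_mul_exp_neg_mul_rpow (p := 1) one_pos
    (q := σ - 1) (by linarith) hc
  simp only [Real.rpow_one, sub_add_cancel, div_one, neg_mul, one_div, inv_one, mul_one] at h
  rw [← h]

lemma integrable_one_add_sq_rpow {σ : ℝ} (hσ : 1/2 < σ) :
    Integrable (fun t : ℝ => (1 + t^2) ^ (-σ)) := by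
  have h2σ : (1:ℝ) < 2 * σ := by linarith
  have hint : Integrable (fun t : ℝ => (2:ℝ)^σ * (1 + ‖t‖) ^ (-(2*σ))) := by
    apply Integrable.const_mul
    exact integrable_one_add_norm (by simpa using h2σ)
  refine hint.mono' ?_ ?_
  · apply Continuous.aestronglyMeasurable
    apply Continuous.rpow_const (by fun_prop)
    intro t; left; positivity
  · filter_upwards with t
    have h1 : (0:ℝ) < 1 + t^2 := by positivity
    rw [Real.norm_eq_abs, abs_of_pos (Real.rpow_pos_of_pos h1 _)]
    have key : ((1 + |t|)^2 / 2 : ℝ) ≤ 1 + t^2 := by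
      nlinarith [sq_nonneg (1 - |t|), _root_.sq_abs t]
    have h3 : (1 + t^2 : ℝ) ^ (-σ) ≤ ((1 + |t|)^2 / 2) ^ (-σ) :=
      Real.rpow_le_rpow_of_nonpos (by positivity) key (by linarith)
    refine h3.trans (le_of_eq ?_)
    rw [Real.div_rpow (by positivity) (by norm_num), ← Real.rpow_natCast (1 + |t|) 2,
      ← Real.rpow_mul (by positivity), div_eq_mul_inv, ← Real.rpow_neg (by norm_num)]
    rw [Real.norm_eq_abs]
    push_cast
    ring_nf

lemma uncurry_integrable (s : ℂ) (hs : 1 / 2 < s.re) (a : ℝ) :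
    Integrable (Function.uncurry (fun t u : ℝ => (u:ℂ) ^ (s-1) *
        Complex.exp (-(((1 + t^2 : ℝ) : ℂ) * u)) *
        Complex.exp (-2 * Real.pi * Complex.I * a * t)))
      ((volume : Measure ℝ).prod ((volume : Measure ℝ).restrict (Ioi 0))) := by
  have hs0 : 0 < s.re := by norm_num at hs ⊢; linarith
  have hmeas : AEStronglyMeasurable (Function.uncurry (fun t u : ℝ => (u:ℂ) ^ (s-1) *
      Complex.exp (-(((1 + t^2 : ℝ) : ℂ) * u)) *
      Complex.exp (-2 * Real.pi * Complex.I * a * t)))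
      ((volume : Measure ℝ).prod ((volume : Measure ℝ).restrict (Ioi 0))) := by
    have hset : (volume : Measure ℝ).prod ((volume : Measure ℝ).restrict (Ioi 0)) =
        ((volume : Measure (ℝ × ℝ))).restrict (univ ×ˢ Ioi 0) := by
      rw [MeasureTheory.Measure.volume_eq_prod, ← Measure.prod_restrict, Measure.restrict_univ]
    rw [hset]
    apply ContinuousOn.aestronglyMeasurable ?_ (MeasurableSet.univ.prod measurableSet_Ioi)
    apply ContinuousOn.mul
    apply ContinuousOn.mul
    · intro p hp
      have h1 : ContinuousAt (fun x : ℝ => (x:ℂ) ^ (s-1)) p.2 :=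
        continuousAt_ofReal_cpow_const p.2 (s-1) (Or.inr (ne_of_gt hp.2))
      exact (h1.comp continuous_snd.continuousAt).continuousWithinAt
    · apply Continuous.continuousOn
      fun_prop
    · apply Continuous.continuousOn
      fun_prop
  refine (integrable_prod_iff hmeas).2 ⟨?_, ?_⟩
  · filter_upwards with t
    have hc : (0:ℝ) < 1 + t^2 := by positivity
    simpa only [Function.uncurry_apply_pair] using
      (integrableOn_cpow_mul_exp_neg hs0 hc).mul_const
        (Complex.exp (-2 * Real.pi * Complex.I * a * t))
  · have heq : ∀ t : ℝ, (∫ u in Ioi (0:ℝ), ‖(u:ℂ) ^ (s-1) *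
        Complex.exp (-(((1 + t^2 : ℝ) : ℂ) * u)) *
        Complex.exp (-2 * Real.pi * Complex.I * a * t)‖) =
        (1 + t^2) ^ (-s.re) * Real.Gamma s.re := by
      intro t
      have hc : (0:ℝ) < 1 + t^2 := by positivity
      have h1 : ∀ u ∈ Ioi (0:ℝ), ‖(u:ℂ) ^ (s-1) *
          Complex.exp (-(((1 + t^2 : ℝ) : ℂ) * u)) *
          Complex.exp (-2 * Real.pi * Complex.I * a * t)‖ =
          u ^ (s.re - 1) * Real.exp (-((1 + t^2) * u)) := by
        intro u hu
        rw [norm_mul, norm_mul, Complex.norm_exp, Complex.norm_exp,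
          Complex.norm_cpow_eq_rpow_re_of_pos hu]
        have e1 : (-(((1 + t^2 : ℝ) : ℂ) * u)).re = -((1 + t^2) * u) := by
          have : (-(((1 + t^2 : ℝ) : ℂ) * u)) = ((-((1 + t^2) * u) : ℝ) : ℂ) := by
            push_cast; ring
          rw [this, Complex.ofReal_re]
        have e2 : (-2 * Real.pi * Complex.I * a * t).re = 0 := by
          simp [Complex.mul_re, Complex.mul_im]
        rw [e1, e2, Real.exp_zero, mul_one, Complex.sub_re, Complex.one_re]
      rw [setIntegral_congr_fun measurableSet_Ioi h1]
      exact integral_rpow_mul_exp_neg' hs0 hc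
    simp only [Function.uncurry_apply_pair]
    rw [show (fun t : ℝ => (∫ u in Ioi (0:ℝ), ‖(u:ℂ) ^ (s-1) *
        Complex.exp (-(((1 + t^2 : ℝ) : ℂ) * u)) *
        Complex.exp (-2 * Real.pi * Complex.I * a * t)‖)) =
        (fun t : ℝ => (1 + t^2) ^ (-s.re) * Real.Gamma s.re) from funext heq]
    exact (integrable_one_add_sq_rpow hs).mul_const _

set_option maxHeartbeats 2000000 in
lemma key (s : ℂ) (hs : 1 / 2 < s.re) {a : ℝ} (ha : 0 < a) :
    ∫ t : ℝ, ((1 : ℂ) + (t : ℂ) ^ 2) ^ (-s) * Complex.exp (-2 * Real.pi * Complex.I * a * t) =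
      2 * (Real.pi : ℂ) ^ s * ((a : ℝ) : ℂ) ^ (s - 1 / 2) * (Complex.Gamma s)⁻¹ *
        besselK (s - 1 / 2) (2 * Real.pi * a) := by
  have hs0 : 0 < s.re := by norm_num at hs ⊢; linarith
  have hΓ : Complex.Gamma s ≠ 0 := Complex.Gamma_ne_zero_of_re_pos hs0
  set F : ℝ → ℝ → ℂ := fun t u => (u:ℂ) ^ (s-1) *
    Complex.exp (-(((1 + t^2 : ℝ) : ℂ) * u)) * Complex.exp (-2 * Real.pi * Complex.I * a * t)
    with hF
  have hInt : Integrable (Function.uncurry F)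
      ((volume : Measure ℝ).prod ((volume : Measure ℝ).restrict (Ioi 0))) :=
    uncurry_integrable s hs a
  -- Step 1 : Gamma representation
  have step1 : ∫ t : ℝ, ((1 : ℂ) + (t : ℂ) ^ 2) ^ (-s) *
      Complex.exp (-2 * Real.pi * Complex.I * a * t) =
      (Complex.Gamma s)⁻¹ * ∫ t : ℝ, ∫ u in Ioi (0:ℝ), F t u := by
    rw [← integral_const_mul]
    congr 1
    funext t
    have hc : (0:ℝ) < 1 + t^2 := by positivity
    have h1 := integral_cpow_mul_exp_neg hs0 hc
    have h2 : ((1 + t^2 : ℝ) : ℂ) ^ (-s) = ((1:ℂ) + (t:ℂ)^2) ^ (-s) := by push_cast; ring_nf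
    have h3 : ∫ u in Ioi (0:ℝ), F t u =
        (∫ u in Ioi (0:ℝ), (u:ℂ) ^ (s-1) * Complex.exp (-(((1 + t^2 : ℝ) : ℂ) * u))) *
          Complex.exp (-2 * Real.pi * Complex.I * a * t) := by
      rw [← integral_mul_const]
    rw [h3, h1, h2]
    field_simp
  rw [step1]
  -- Step 3 : Fubini
  rw [show (∫ t : ℝ, ∫ u in Ioi (0:ℝ), F t u) =
      ∫ u in Ioi (0:ℝ), ∫ t : ℝ, F t u from integral_integral_swap hInt]
  -- Step 4 : Gaussian integral
  have step4 : ∀ u ∈ Ioi (0:ℝ), (∫ t : ℝ, F t u) =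
      ((Real.pi ^ ((1:ℝ)/2) : ℝ) : ℂ) *
        ((u:ℂ) ^ ((s - 1/2) - 1) * Complex.exp (-(u + (Real.pi * a)^2/u : ℝ))) := by
    intro u hu
    have hu' : (0:ℝ) < u := hu
    have hgauss := fourierIntegral_gaussian (b := (u:ℂ))
      (by simpa using hu') ((-2) * Real.pi * a : ℝ)
    have h5 : (∫ t : ℝ, F t u) = (u:ℂ) ^ (s-1) * Complex.exp (-(u:ℂ)) *
        ∫ x : ℝ, Complex.exp (Complex.I * ((-2) * Real.pi * a : ℝ) * x) *
          Complex.exp (-(u:ℂ) * x^2) := by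
      rw [← integral_const_mul]
      congr 1
      funext t
      rw [hF]
      simp only
      calc ((u:ℝ):ℂ) ^ (s-1) * Complex.exp (-(((1 + t^2 : ℝ) : ℂ) * u)) *
            Complex.exp (-2 * Real.pi * Complex.I * a * t)
          = ((u:ℝ):ℂ) ^ (s-1) * Complex.exp (-(((1 + t^2 : ℝ) : ℂ) * u) +
              -2 * Real.pi * Complex.I * a * t) := by
            rw [Complex.exp_add]; ring
        _ = ((u:ℝ):ℂ) ^ (s-1) * Complex.exp (-((u:ℝ):ℂ) +
              (Complex.I * (((-2) * Real.pi * a : ℝ):ℂ) * t + -((u:ℝ):ℂ) * (t:ℂ)^2)) := by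
            congr 2
            push_cast
            ring
        _ = ((u:ℝ):ℂ) ^ (s-1) * Complex.exp (-((u:ℝ):ℂ)) *
            (Complex.exp (Complex.I * (((-2) * Real.pi * a : ℝ):ℂ) * t) *
              Complex.exp (-((u:ℝ):ℂ) * (t:ℂ)^2)) := by
            rw [Complex.exp_add, Complex.exp_add]; ring
    rw [h5, hgauss]
    have h6 : ((Real.pi : ℂ) / (u:ℂ)) ^ ((1:ℂ)/2) =
        (((Real.pi / u) ^ ((1:ℝ)/2) : ℝ) : ℂ) := by
      rw [Complex.ofReal_cpow (by positivity) ((1:ℝ)/2)]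
      push_cast
      ring_nf
    have h7 : (((Real.pi / u) ^ ((1:ℝ)/2) : ℝ) : ℂ) =
        ((Real.pi ^ ((1:ℝ)/2) : ℝ) : ℂ) * (((u ^ (-(1:ℝ)/2) : ℝ)) : ℂ) := by
      rw [← Complex.ofReal_mul]
      congr 1
      rw [Real.div_rpow Real.pi_nonneg hu'.le, div_eq_mul_inv, ← Real.rpow_neg hu'.le]
      norm_num
    have h8 : (((u ^ (-(1:ℝ)/2) : ℝ)) : ℂ) = (u:ℂ) ^ (-(1:ℂ)/2) := by
      rw [Complex.ofReal_cpow hu'.le]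
      push_cast
      ring_nf
    have h9 : (u:ℂ) ^ (s-1) * (u:ℂ) ^ (-(1:ℂ)/2) = (u:ℂ) ^ ((s - 1/2) - 1) := by
      rw [← Complex.cpow_add _ _ (Complex.ofReal_ne_zero.2 hu'.ne')]
      congr 1
      ring
    have h10 : Complex.exp (-(u:ℂ)) *
        Complex.exp (-(((-2) * Real.pi * a : ℝ):ℂ)^2 / (4 * (u:ℂ))) =
        Complex.exp (-(u + (Real.pi * a)^2/u : ℝ)) := by
      rw [← Complex.exp_add]
      congr 1
      push_cast
      field_simp
      ring
    rw [h6, h7, h8]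
    calc (u:ℂ) ^ (s-1) * Complex.exp (-(u:ℂ)) *
        (((Real.pi ^ ((1:ℝ)/2) : ℝ) : ℂ) * (u:ℂ) ^ (-(1:ℂ)/2) *
          Complex.exp (-(((-2) * Real.pi * a : ℝ):ℂ)^2 / (4 * (u:ℂ))))
        = ((Real.pi ^ ((1:ℝ)/2) : ℝ) : ℂ) * (((u:ℂ) ^ (s-1) * (u:ℂ) ^ (-(1:ℂ)/2)) *
            (Complex.exp (-(u:ℂ)) *
              Complex.exp (-(((-2) * Real.pi * a : ℝ):ℂ)^2 / (4 * (u:ℂ))))) := by ring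
      _ = _ := by rw [h9, h10]
  rw [setIntegral_congr_fun measurableSet_Ioi step4, integral_const_mul,
    integral_cpow_mul_exp_add_div (s - 1/2) (by positivity : (0:ℝ) < Real.pi * a)]
  -- Step 5 : Bessel function
  have hbes := integral_cexp_mul_sub_cosh (s - 1/2)
    (by positivity : (0:ℝ) < 2 * (Real.pi * a))
  have harg : ∀ y : ℝ, (2 * (Real.pi * a) * Real.cosh y) = 2 * Real.pi * a * Real.cosh y := by
    intro y; ring
  rw [show (∫ y : ℝ, Complex.exp ((s - 1/2) * y) *
      Complex.exp (-(2*(Real.pi * a)*Real.cosh y : ℝ))) =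
      2 * besselK (s - 1/2) (2 * Real.pi * a) by
    rw [← show (2 * (Real.pi * a) : ℝ) = 2 * Real.pi * a by ring]
    exact hbes]
  -- Step 6 : final algebra
  have hππ : ((Real.pi ^ ((1:ℝ)/2) : ℝ) : ℂ) * ((Real.pi * a : ℝ) : ℂ) ^ (s - 1/2) =
      (Real.pi : ℂ) ^ s * ((a:ℝ) : ℂ) ^ (s - 1/2) := by
    rw [Complex.ofReal_mul, mul_cpow_ofReal_nonneg Real.pi_nonneg ha.le,
      Complex.ofReal_cpow Real.pi_nonneg]
    have : ((((1:ℝ)/2 : ℝ)) : ℂ) = 1/2 := by push_cast; ring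
    rw [this, ← mul_assoc, ← Complex.cpow_add _ _
      (Complex.ofReal_ne_zero.2 Real.pi_ne_zero)]
    congr 2
    ring
  calc (Complex.Gamma s)⁻¹ * (((Real.pi ^ ((1:ℝ)/2) : ℝ) : ℂ) *
      (((Real.pi * a : ℝ) : ℂ) ^ (s - 1/2) * (2 * besselK (s - 1/2) (2 * Real.pi * a))))
      = (((Real.pi ^ ((1:ℝ)/2) : ℝ) : ℂ) * ((Real.pi * a : ℝ) : ℂ) ^ (s - 1/2)) *
        ((Complex.Gamma s)⁻¹ * (2 * besselK (s - 1/2) (2 * Real.pi * a))) := by ring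
    _ = _ := by rw [hππ]; ring

end BesselKAux

/-- For `Re(s) > 1/2` and nonzero real `n`,
`∫_{-∞}^{∞} (1+t²)^{-s} e^{-2πint} dt = 2 π^s |n|^{s-1/2} Γ(s)^{-1} K_{s-1/2}(2π|n|)`. -/
theorem integral_one_add_sq_cpow_neg_mul_exp (s : ℂ) (hs : 1 / 2 < s.re) (n : ℝ) (hn : n ≠ 0) :
    ∫ t : ℝ, ((1 : ℂ) + (t : ℂ) ^ 2) ^ (-s) * Complex.exp (-2 * Real.pi * Complex.I * n * t) =
      2 * (Real.pi : ℂ) ^ s * ((|n| : ℝ) : ℂ) ^ (s - 1 / 2) * (Complex.Gamma s)⁻¹ *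
        besselK (s - 1 / 2) (2 * Real.pi * |n|) := by
  rcases lt_or_gt_of_ne hn with hneg | hpos
  · have ha : 0 < |n| := abs_pos.2 hn
    have habs : |n| = -n := abs_of_neg hneg
    have h1 := BesselKAux.key s hs ha
    rw [← h1]
    have h2 := MeasureTheory.integral_neg_eq_self
      (fun t : ℝ => ((1 : ℂ) + (t : ℂ) ^ 2) ^ (-s) *
        Complex.exp (-2 * Real.pi * Complex.I * |n| * t)) (volume : Measure ℝ)
    rw [← h2]
    congr 1
    funext t
    rw [habs]
    push_cast
    ring_nf
  · have h1 := BesselKAux.key s hs (show (0:ℝ) < |n| from abs_pos.2 hn)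
    rw [← h1, abs_of_pos hpos]
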